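/- Let Γ be a group of isometries of a proper, length metric space X acting discretely and freely. Then the map Π : Loc-Geod(X) → Loc-Geod(Γ\X) defined by Π(γ) = π∘γ is continuous, surjective and Γ-equivariant, and the induced map Π̄ : Γ\Loc-Geod(X) → Loc-Geod(Γ\X) is a homeomorphism. -/

import Mathlib

open Filter Metric Set MeasureTheory Topology
open scoped ENNReal NNReal

noncomputable section

namespace Paper

variable {X : Type*} [MetricSpace X]

/-- The Gromov product `(y,z)_x`. -/
def gromov (x y z : X) : ℝ := (dist x y + dist x z - dist y z) / 2

/-- `δ`-hyperbolicity via the four points condition on Gromov products. -/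
def IsHyperbolic (X : Type*) [MetricSpace X] (δ : ℝ) : Prop :=
  ∀ w x y z : X, min (gromov w x y) (gromov w y z) - δ ≤ gromov w x z

/-- `X` is `P₀`-packed at scale `r₀`: every closed ball of radius `3r₀` contains at most `P₀`
points that are pairwise `2r₀`-separated. -/
def IsPacked (X : Type*) [MetricSpace X] (P₀ : ℕ) (r₀ : ℝ) : Prop :=
  ∀ (x : X) (s : Finset X), (↑s : Set X) ⊆ Metric.closedBall x (3 * r₀) →
    (∀ y ∈ s, ∀ z ∈ s, y ≠ z → 2 * r₀ < dist y z) → s.card ≤ P₀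

/-- A `σ`-geodesic line: an isometric line all whose subsegments are `σ`-geodesics. -/
structure IsSigmaGeodLine (σ : X → X → ℝ → X) (γ : ℝ → X) : Prop where
  isom : Isometry γ
  seg : ∀ s t : ℝ, s ≤ t → ∀ l ∈ Set.Icc (0:ℝ) 1, σ (γ s) (γ t) l = γ (s + l * (t - s))

/-- `(X,σ)` is a GCB-space: `σ` is a convex, consistent, reversible, geodesically complete
geodesic bicombing on the (complete) metric space `X`. -/
structure IsGCB (σ : X → X → ℝ → X) : Prop where
  source : ∀ x y : X, σ x y 0 = x
  target : ∀ x y : X, σ x y 1 = y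
  propor : ∀ x y : X, ∀ s ∈ Set.Icc (0:ℝ) 1, ∀ t ∈ Set.Icc (0:ℝ) 1,
    dist (σ x y s) (σ x y t) = |s - t| * dist x y
  convex : ∀ x y x' y' : X, ConvexOn ℝ (Set.Icc (0:ℝ) 1) fun t => dist (σ x y t) (σ x' y' t)
  consistent : ∀ x y : X, ∀ s t : ℝ, 0 ≤ s → s ≤ t → t ≤ 1 → ∀ l ∈ Set.Icc (0:ℝ) 1,
    σ (σ x y s) (σ x y t) l = σ x y ((1 - l) * s + l * t)
  reversible : ∀ x y : X, ∀ t ∈ Set.Icc (0:ℝ) 1, σ x y t = σ y x (1 - t)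
  geodComplete : ∀ x y : X, ∃ γ : ℝ → X, IsSigmaGeodLine σ γ ∧ ∃ a b : ℝ, a ≤ b ∧
    b - a = dist x y ∧ ∀ l ∈ Set.Icc (0:ℝ) 1, γ (a + l * (b - a)) = σ x y l

section Group

variable (G : Type*) [Group G] [MulAction G X]

/-- A group of isometries is discrete if orbits meet balls in finitely many elements. -/
def DiscreteAction (X : Type*) [MetricSpace X] [MulAction G X] : Prop :=
  ∀ (x : X) (R : ℝ), {g : G | dist x (g • x) ≤ R}.Finite

/-- The action is free. -/
def FreeAction (X : Type*) [MetricSpace X] [MulAction G X] : Prop :=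
  ∀ (g : G) (x : X), g • x = x → g = 1

/-- `Γ` acts by `σ`-isometries. -/
def SigmaEquivariant (σ : X → X → ℝ → X) : Prop :=
  ∀ (g : G) (x y : X), ∀ t ∈ Set.Icc (0:ℝ) 1, g • σ x y t = σ (g • x) (g • y) t

/-- The number of orbit points in the open ball `B(x,T)`. -/
def orbitCount (x : X) (T : ℝ) : ℕ :=
  Nat.card {y : X // y ∈ MulAction.orbit G x ∧ dist x y < T}

/-- The critical exponent `h_Γ = limsup (1/T) log #(Γx ∩ B(x,T))`. -/
def critExp (x : X) : EReal :=
  limsup (fun T : ℝ => ((Real.log (orbitCount G x T) / T : ℝ) : EReal)) atTop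

end Group

/-- The quotient space `Γ\X`. -/
def QuotX (G : Type*) (X : Type*) [Group G] [MulAction G X] [MetricSpace X] :=
  Quotient (MulAction.orbitRel G X)

section Quot

variable (G : Type*) [Group G] [MulAction G X] [IsIsometricSMul G X]

private lemma bddb (x y : X) : BddBelow (Set.range fun g : G => dist x (g • y)) :=
  ⟨0, by rintro _ ⟨g, rfl⟩; exact dist_nonneg⟩

/-- The quotient distance `d(πx,πy) = inf_g d(x, g·y)`. -/
def qdist (a b : QuotX G X) : ℝ :=
  ⨅ g : G, dist (Quotient.out a) (g • Quotient.out b)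

private lemma qdist_self (a : QuotX G X) : qdist G a a = 0 := by
  refine le_antisymm ?_ (le_ciInf fun g => dist_nonneg)
  have h := ciInf_le (bddb G (Quotient.out a) (Quotient.out a)) (1 : G)
  simp at h
  exact h

private lemma qdist_comm_le (a b : QuotX G X) : qdist G a b ≤ qdist G b a := by
  refine le_ciInf fun g => ?_
  have h := ciInf_le (bddb G (Quotient.out a) (Quotient.out b)) g⁻¹
  refine h.trans_eq ?_
  rw [← dist_smul g (Quotient.out a) (g⁻¹ • Quotient.out b), smul_inv_smul, dist_comm]

private lemma qdist_triangle (a b c : QuotX G X) :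
    qdist G a c ≤ qdist G a b + qdist G b c := by
  refine le_of_forall_pos_le_add fun ε hε => ?_
  have h1 : qdist G a b < qdist G a b + ε / 2 := lt_add_of_pos_right _ (half_pos hε)
  have h2 : qdist G b c < qdist G b c + ε / 2 := lt_add_of_pos_right _ (half_pos hε)
  obtain ⟨g, hg⟩ := exists_lt_of_ciInf_lt h1
  obtain ⟨h, hh⟩ := exists_lt_of_ciInf_lt h2
  have key : qdist G a c ≤ dist (Quotient.out a) ((g * h) • Quotient.out c) :=
    ciInf_le (bddb G _ _) (g * h)
  have e : dist (g • Quotient.out b) ((g * h) • Quotient.out c)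
      = dist (Quotient.out b) (h • Quotient.out c) := by
    rw [mul_smul, dist_smul]
  have tri := dist_triangle (Quotient.out a) (g • Quotient.out b) ((g * h) • Quotient.out c)
  rw [e] at tri
  have := key.trans tri
  linarith

/-- The quotient pseudometric on `Γ\X` (a genuine metric whenever the action is discrete
and free). -/
instance : PseudoMetricSpace (QuotX G X) where
  dist := qdist G
  dist_self := qdist_self G
  dist_comm a b := le_antisymm (qdist_comm_le G a b) (qdist_comm_le G b a)
  dist_triangle := qdist_triangle G

/-- The projection `π : X → Γ\X`. -/
def projQ (x : X) : QuotX G X := Quotient.mk (MulAction.orbitRel G X) x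

lemma projQ_dist_le (x y : X) : dist (projQ G x) (projQ G y) ≤ dist x y := by
  obtain ⟨k, hk⟩ := MulAction.mem_orbit_iff.mp
    ((MulAction.orbitRel_apply (G := G)).mp (Quotient.mk_out (s := MulAction.orbitRel G X) x))
  obtain ⟨l, hl⟩ := MulAction.mem_orbit_iff.mp
    ((MulAction.orbitRel_apply (G := G)).mp (Quotient.mk_out (s := MulAction.orbitRel G X) y))
  have h1 : dist (projQ G x) (projQ G y)
      ≤ dist (Quotient.out (projQ G x)) ((k * l⁻¹) • Quotient.out (projQ G y)) :=
    ciInf_le (bddb G _ _) (k * l⁻¹)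
  have hk2 : Quotient.out (projQ G x) = k • x := hk.symm
  have hl2 : Quotient.out (projQ G y) = l • y := hl.symm
  rw [hk2, hl2, smul_smul, inv_mul_cancel_right, dist_smul] at h1
  exact h1

/-- `π` as a continuous (1-Lipschitz) map. -/
def projCM : C(X, QuotX G X) :=
  ⟨projQ G, (LipschitzWith.of_dist_le_mul (K := 1) fun a b => by
    simpa using projQ_dist_le G a b).continuous⟩

end Quot

end Paper

namespace Paper

variable {X : Type*} [MetricSpace X]

/-- The space of local geodesic lines of a (pseudo)metric space `Y`, as a subset of the space
of continuous maps `ℝ → Y` (with the topology of uniform convergence on compact sets). -/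
def LocGeodSet (Y : Type*) [PseudoMetricSpace Y] : Set C(ℝ, Y) :=
  {γ | ∀ t : ℝ, ∃ ε > 0, ∀ s ∈ Set.Icc (t - ε) (t + ε), ∀ u ∈ Set.Icc (t - ε) (t + ε),
    dist (γ s) (γ u) = |s - u|}

/-- The set of (parametrized) `σ`-geodesic lines of `X`. -/
def SigmaGeodLines (σ : X → X → ℝ → X) : Set C(ℝ, X) := {γ | IsSigmaGeodLine σ ⇑γ}

section Proj

variable (G : Type*) [Group G] [MulAction G X] [IsIsometricSMul G X]

/-- Post-composition with the projection `π : X → Γ\X`. -/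
def projComp (γ : C(ℝ, X)) : C(ℝ, QuotX G X) := (projCM G).comp γ

/-- The space `Loc-Geod_σ(Γ\X)`: the image of the `σ`-geodesic lines of `X` under `Π`. -/
def LocGeodQuotSet (σ : X → X → ℝ → X) : Set C(ℝ, QuotX G X) :=
  projComp G '' SigmaGeodLines σ

end Proj

/-- Translation of `ℝ` by `c`, as a continuous map. -/
def trCM (c : ℝ) : C(ℝ, ℝ) := ⟨fun t => t + c, continuous_add_right c⟩

/-- The reparametrization flow `Φ_c γ = γ(· + c)`. -/
def shiftCM {Y : Type*} [TopologicalSpace Y] (c : ℝ) (γ : C(ℝ, Y)) : C(ℝ, Y) := γ.comp (trCM c)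

lemma shift_sigma {σ : X → X → ℝ → X} (c : ℝ) {γ : ℝ → X} (h : IsSigmaGeodLine σ γ) :
    IsSigmaGeodLine σ fun t => γ (t + c) := by
  constructor
  · exact h.isom.comp (Isometry.of_dist_eq fun a b => dist_add_right a b c)
  · intro s t hst l hl
    have h2 := h.seg (s + c) (t + c) (by linarith) l hl
    calc σ (γ (s + c)) (γ (t + c)) l = γ (s + c + l * (t + c - (s + c))) := h2
    _ = γ (s + l * (t - s) + c) := by ring_nf

section Flow

variable (G : Type*) [Group G] [MulAction G X] [IsIsometricSMul G X]

lemma shift_mem {σ : X → X → ℝ → X} (c : ℝ) {γ : C(ℝ, QuotX G X)}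
    (h : γ ∈ LocGeodQuotSet G σ) : shiftCM c γ ∈ LocGeodQuotSet G σ := by
  obtain ⟨γ', hγ', rfl⟩ := h
  exact ⟨shiftCM c γ', shift_sigma c hγ', ContinuousMap.ext fun t => rfl⟩

/-- The time-one map `Φ₁` of the reparametrization flow on `Loc-Geod_σ(Γ\X)`. -/
def flowOne (σ : X → X → ℝ → X) : ↥(LocGeodQuotSet G σ) → ↥(LocGeodQuotSet G σ) :=
  fun γ => ⟨shiftCM 1 γ.1, shift_mem G 1 γ.2⟩

end Flow

/-- The class `F` of admissible weight functions. -/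
structure AdmissibleF (f : ℝ → ℝ) : Prop where
  cont : Continuous f
  pos : ∀ s, 0 < f s
  symm : ∀ s : ℝ, f (-s) = f s
  integrable : MeasureTheory.Integrable f
  mass : ∫ s, f s = 1
  momentIntegrable : MeasureTheory.Integrable fun s : ℝ => 2 * |s| * f s

/-- The constant `C(f) = ∫ 2|s| f(s) ds`. -/
def Cf (f : ℝ → ℝ) : ℝ := ∫ s : ℝ, 2 * |s| * f s

/-- The distance `f(γ,γ') = ∫ d(γ(s),γ'(s)) f(s) ds` on spaces of (local) geodesics. -/
def fDist (f : ℝ → ℝ) {Y : Type*} [PseudoMetricSpace Y] (γ γ' : C(ℝ, Y)) : ℝ :=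
  ∫ s : ℝ, dist (γ s) (γ' s) * f s

section Dynamics

variable {Y : Type*}

/-- The dynamical distance `d^n(y,y') = max_{0 ≤ i ≤ n-1} d(T^i y, T^i y')`. -/
def dynDist (d : Y → Y → ℝ) (T : Y → Y) (n : ℕ) (a b : Y) : ℝ :=
  ⨆ i : Fin n, d (T^[(i : ℕ)] a) (T^[(i : ℕ)] b)

/-- The dynamical ball `B_{d^n}(a,r)`. -/
def dynBall (d : Y → Y → ℝ) (T : Y → Y) (n : ℕ) (a : Y) (r : ℝ) : Set Y :=
  {b | dynDist d T n a b < r}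

/-- The covering number of `K` at scale `r` with respect to a distance function `d`. -/
def covNum (d : Y → Y → ℝ) (K : Set Y) (r : ℝ) : ℕ :=
  sInf {m : ℕ | ∃ c : Fin m → Y, K ⊆ ⋃ i, {b | d (c i) b < r}}

/-- The Bowen entropy of `K` w.r.t. `d`: `lim_{r→0} limsup_n (1/n) log Cov_{d^n}(K,r)`. -/
def covEntropy (d : Y → Y → ℝ) (T : Y → Y) (K : Set Y) : EReal :=
  ⨆ r : {r : ℝ // 0 < r},
    limsup (fun n : ℕ => ((Real.log (covNum (dynDist d T n) K r.1) / n : ℝ) : EReal)) atTop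

/-- The entropy of (the join of the first `n` iterates of) a finite measurable partition. -/
def partitionEnt [MeasurableSpace Y] (μ : Measure Y) (T : Y → Y) {k : ℕ}
    (P : Fin k → Set Y) (n : ℕ) : ℝ :=
  ∑ a : Fin n → Fin k, Real.negMulLog (μ (⋂ i : Fin n, T^[(i : ℕ)] ⁻¹' P (a i))).toReal

/-- The Kolmogorov–Sinai entropy of `μ`. -/
def ksEntropy [MeasurableSpace Y] (μ : Measure Y) (T : Y → Y) : EReal :=
  ⨆ (k : ℕ) (P : Fin k → Set Y)
    (_ : (∀ i, MeasurableSet (P i)) ∧ Pairwise (Function.onFun Disjoint P) ∧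
      ⋃ i, P i = Set.univ),
    ((liminf (fun n : ℕ => partitionEnt μ T P n / n) atTop : ℝ) : EReal)

/-- `d` is the distance of a metric inducing the topology of `Y`. -/
def InducesTopology [ts : TopologicalSpace Y] (d : Y → Y → ℝ) : Prop :=
  ∃ m : MetricSpace Y, m.toPseudoMetricSpace.toUniformSpace.toTopologicalSpace = ts ∧
    ∀ a b : Y, @dist Y m.toPseudoMetricSpace.toDist a b = d a b

/-- `d` is the distance of a complete metric inducing the topology of `Y`. -/
def InducesTopologyComplete [ts : TopologicalSpace Y] (d : Y → Y → ℝ) : Prop :=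
  ∃ m : MetricSpace Y, m.toPseudoMetricSpace.toUniformSpace.toTopologicalSpace = ts ∧
    (∀ a b : Y, @dist Y m.toPseudoMetricSpace.toDist a b = d a b) ∧
    @CompleteSpace Y m.toPseudoMetricSpace.toUniformSpace

/-- The upper local entropy of `μ` with respect to the distance `d`. -/
def upperLocalEnt [MeasurableSpace Y] (μ : Measure Y) (T : Y → Y) (d : Y → Y → ℝ) : EReal :=
  essSup (fun y : Y =>
    ⨆ r : {r : ℝ // 0 < r},
      limsup (fun n : ℕ =>
        ((-Real.log (μ (dynBall d T n y r.1)).toReal / n : ℝ) : EReal)) atTop) μ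

/-- The lower local entropy of `μ` with respect to the distance `d`. -/
def lowerLocalEnt [MeasurableSpace Y] (μ : Measure Y) (T : Y → Y) (d : Y → Y → ℝ) : EReal :=
  essInf (fun y : Y =>
    ⨆ r : {r : ℝ // 0 < r},
      liminf (fun n : ℕ =>
        ((-Real.log (μ (dynBall d T n y r.1)).toReal / n : ℝ) : EReal)) atTop) μ

/-- The ergodic invariant probability measures of `(Y,T)`. -/
def ErgProb [MeasurableSpace Y] (T : Y → Y) :=
  {μ : Measure Y // IsProbabilityMeasure μ ∧ Ergodic T μ}

/-- The topological entropy, defined as the supremum of the Kolmogorov–Sinai entropies of the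
ergodic invariant probability measures. -/
def topEnt [MeasurableSpace Y] (T : Y → Y) : EReal :=
  ⨆ μ : ErgProb T, ksEntropy μ.1 T

/-- The upper local entropy of the system: `sup_μ inf_d` of the upper local entropies. -/
def upperLocalEntSys [TopologicalSpace Y] [MeasurableSpace Y] (T : Y → Y) : EReal :=
  ⨆ μ : ErgProb T, ⨅ d : {d : Y → Y → ℝ // InducesTopologyComplete d},
    upperLocalEnt μ.1 T d.1

/-- The lower local entropy of the system: `sup_μ inf_d` of the lower local entropies. -/
def lowerLocalEntSys [TopologicalSpace Y] [MeasurableSpace Y] (T : Y → Y) : EReal :=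
  ⨆ μ : ErgProb T, ⨅ d : {d : Y → Y → ℝ // InducesTopologyComplete d},
    lowerLocalEnt μ.1 T d.1

/-- The invariant topological entropy: in the Bowen formula the supremum is restricted to the
compact `T`-invariant subsets. -/
def invTopEnt [TopologicalSpace Y] (T : Y → Y) : EReal :=
  ⨅ d : {d : Y → Y → ℝ // InducesTopology d},
    ⨆ K : {K : Set Y // IsCompact K ∧ T '' K = K}, covEntropy d.1 T K.1

end Dynamics

end Paper

namespace Paper

/-- `X` is a length space: the distance is the infimum of the lengths (total variations) of the
continuous paths joining two points. -/
def IsLengthSpace (X : Type*) [MetricSpace X] : Prop :=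
  ∀ x y : X, ENNReal.ofReal (dist x y) =
    ⨅ (γ : C(unitInterval, X)) (_ : γ 0 = x) (_ : γ 1 = y), eVariationOn γ Set.univ

/-- The action of an isometry `g` on continuous maps `ℝ → X` by postcomposition. -/
def smulCM {X : Type*} [MetricSpace X] (G : Type*) [Group G] [MulAction G X]
    [IsIsometricSMul G X] (g : G) (γ : C(ℝ, X)) : C(ℝ, X) :=
  ⟨fun t => g • γ t, ((isometry_smul X g).continuous).comp γ.continuous⟩

/-- The orbit equivalence relation of `Γ` on `Loc-Geod(X)`. -/
def locRel {X : Type*} [MetricSpace X] (G : Type*) [Group G] [MulAction G X]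
    [IsIsometricSMul G X] (a b : ↥(LocGeodSet X)) : Prop :=
  ∃ g : G, smulCM G g a.1 = b.1

end Paper



namespace Paper

section Aux

variable {X : Type*} [MetricSpace X] (G : Type*) [Group G] [MulAction G X] [IsIsometricSMul G X]

lemma bddb' (x y : X) : BddBelow (Set.range fun g : G => dist x (g • y)) :=
  ⟨0, by rintro _ ⟨g, rfl⟩; exact dist_nonneg⟩

lemma dist_projQ_eq (x y : X) :
    dist (projQ G x) (projQ G y) = ⨅ g : G, dist x (g • y) := by
  obtain ⟨k, hk⟩ := MulAction.mem_orbit_iff.mp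
    ((MulAction.orbitRel_apply (G := G)).mp (Quotient.mk_out (s := MulAction.orbitRel G X) x))
  obtain ⟨l, hl⟩ := MulAction.mem_orbit_iff.mp
    ((MulAction.orbitRel_apply (G := G)).mp (Quotient.mk_out (s := MulAction.orbitRel G X) y))
  have hk2 : Quotient.out (projQ G x) = k • x := hk.symm
  have hl2 : Quotient.out (projQ G y) = l • y := hl.symm
  have h0 : dist (projQ G x) (projQ G y) = ⨅ g : G, dist (k • x) (g • l • y) := by
    show qdist G _ _ = _
    unfold qdist
    rw [hk2, hl2]
  rw [h0]
  have hsurj : Function.Surjective (fun g : G => k * g * l⁻¹) := fun g =>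
    ⟨k⁻¹ * g * l, by group⟩
  rw [← hsurj.iInf_comp (g := fun g : G => dist (k • x) (g • l • y))]
  refine iInf_congr fun g => ?_
  simp only [mul_smul, inv_smul_smul]
  rw [dist_smul]

lemma projQ_smul (g : G) (x : X) : projQ G (g • x) = projQ G x := by
  apply Quotient.sound
  exact (MulAction.orbitRel_apply (G := G)).mpr (MulAction.mem_orbit x g)

lemma projQ_eq_iff {x y : X} : projQ G x = projQ G y ↔ ∃ g : G, g • y = x := by
  constructor
  · intro h
    have := Quotient.exact h
    exact MulAction.mem_orbit_iff.mp ((MulAction.orbitRel_apply (G := G)).mp this)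
  · rintro ⟨g, rfl⟩
    exact projQ_smul G g y

lemma exists_sep (hdisc : DiscreteAction G X) (hfree : FreeAction G X) (x : X) :
    ∃ r : ℝ, 0 < r ∧ ∀ g : G, g ≠ 1 → 6 * r ≤ dist x (g • x) := by
  classical
  have hfin : {g : G | dist x (g • x) ≤ 1}.Finite := hdisc x 1
  set s : Finset G := hfin.toFinset.erase 1 with hs
  by_cases hne : s.Nonempty
  · obtain ⟨g0, hg0, hmin⟩ := s.exists_min_image (fun g => dist x (g • x)) hne
    have hg0ne : g0 ≠ 1 := Finset.ne_of_mem_erase hg0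
    have hpos : 0 < dist x (g0 • x) :=
      dist_pos.mpr (by intro h; exact hg0ne (hfree g0 x h.symm))
    refine ⟨min (dist x (g0 • x)) 1 / 6, by positivity, fun g hg => ?_⟩
    by_cases hmem : g ∈ s
    · have h1 := hmin g hmem
      have h2 : min (dist x (g0 • x)) 1 ≤ dist x (g0 • x) := min_le_left _ _
      linarith
    · have h1 : ¬ dist x (g • x) ≤ 1 := by
        intro h; exact hmem (Finset.mem_erase.mpr ⟨hg, hfin.mem_toFinset.mpr h⟩)
      have h2 : min (dist x (g0 • x)) 1 ≤ 1 := min_le_right _ _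
      have h3 := lt_of_not_ge h1
      linarith
  · refine ⟨1/6, by norm_num, fun g hg => ?_⟩
    have h1 : ¬ dist x (g • x) ≤ 1 := fun h =>
      hne ⟨g, Finset.mem_erase.mpr ⟨hg, hfin.mem_toFinset.mpr h⟩⟩
    have h3 := lt_of_not_ge h1
    linarith

lemma loc_isom (hdisc : DiscreteAction G X) (hfree : FreeAction G X) (x : X) :
    ∃ r : ℝ, 0 < r ∧ ∀ y z : X, dist x y ≤ r → dist x z ≤ r →
      dist (projQ G y) (projQ G z) = dist y z := by
  obtain ⟨r, hr, hsep⟩ := exists_sep G hdisc hfree x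
  refine ⟨r, hr, fun y z hy hz => ?_⟩
  refine le_antisymm (projQ_dist_le G y z) ?_
  rw [dist_projQ_eq]
  refine le_ciInf fun g => ?_
  by_cases hg : g = 1
  · subst hg; simp
  · have h1 : dist x (g • x) ≤ dist x y + dist y (g • z) + dist (g • z) (g • x) :=
      dist_triangle4 x y (g • z) (g • x)
    have h2 : dist (g • z) (g • x) = dist z x := dist_smul g z x
    have h3 : dist y z ≤ dist y x + dist x z := dist_triangle y x z
    have h4 := hsep g hg
    have h5 : dist y x = dist x y := dist_comm y x
    have h6 : dist z x = dist x z := dist_comm z x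
    linarith

lemma ball_surj (x : X) (q : QuotX G X) (r : ℝ) (h : dist (projQ G x) q < r) :
    ∃ y : X, projQ G y = q ∧ dist x y < r := by
  have hq : projQ G (Quotient.out q) = q := Quotient.out_eq q
  rw [← hq, dist_projQ_eq] at h
  obtain ⟨g, hg⟩ := exists_lt_of_ciInf_lt h
  exact ⟨g • Quotient.out q, by rw [projQ_smul, hq], hg⟩


lemma projQ_locInj (hdisc : DiscreteAction G X) (hfree : FreeAction G X) :
    IsLocallyInjective (projQ (X := X) G) := by
  intro x
  obtain ⟨r, hr, hiso⟩ := loc_isom G hdisc hfree x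
  refine ⟨Metric.ball x r, Metric.isOpen_ball, Metric.mem_ball_self hr, fun y hy z hz h => ?_⟩
  have h2 := hiso y z (le_of_lt (Metric.mem_ball'.mp hy)) (le_of_lt (Metric.mem_ball'.mp hz))
  rw [h, dist_self] at h2
  exact (dist_eq_zero.mp h2.symm)

lemma lift_unique (hdisc : DiscreteAction G X) (hfree : FreeAction G X)
    {s : Set ℝ} (hs : IsPreconnected s) {γ₁ γ₂ : ℝ → X}
    (h1 : ContinuousOn γ₁ s) (h2 : ContinuousOn γ₂ s)
    (hproj : Set.EqOn (projQ G ∘ γ₁) (projQ G ∘ γ₂) s)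
    {t₀ : ℝ} (ht₀ : t₀ ∈ s) (heq : γ₁ t₀ = γ₂ t₀) : Set.EqOn γ₁ γ₂ s :=
  (T2Space.isSeparatedMap (projQ G)).eqOn_of_comp_eqOn (projQ_locInj G hdisc hfree)
    hs h1 h2 hproj ht₀ heq

lemma local_section (hdisc : DiscreteAction G X) (hfree : FreeAction G X) (z : X) :
    ∃ r : ℝ, 0 < r ∧ ∃ ψ : QuotX G X → X, ψ (projQ G z) = z ∧
      ∀ q, dist (projQ G z) q < r → projQ G (ψ q) = q ∧ dist z (ψ q) ≤ r ∧
        ∀ q', dist (projQ G z) q' < r → dist (ψ q) (ψ q') = dist q q' := by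
  classical
  obtain ⟨r, hr, hiso⟩ := loc_isom G hdisc hfree z
  set ψ : QuotX G X → X := fun q =>
    if h : dist (projQ G z) q < r then Classical.choose (ball_surj G z q r h) else z with hψ
  have hmain : ∀ q, dist (projQ G z) q < r →
      projQ G (ψ q) = q ∧ dist z (ψ q) ≤ r := by
    intro q h
    have hch := Classical.choose_spec (ball_surj G z q r h)
    simp only [hψ, dif_pos h]
    exact ⟨hch.1, le_of_lt hch.2⟩
  have hz0 : ψ (projQ G z) = z := by
    have h0 : dist (projQ G z) (projQ G z) < r := by rwa [dist_self]
    obtain ⟨hp, hd⟩ := hmain _ h0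
    have := hiso z (ψ (projQ G z)) (by rw [dist_self]; exact le_of_lt hr) hd
    rw [hp, dist_self] at this
    exact (dist_eq_zero.mp this.symm).symm
  refine ⟨r, hr, ψ, hz0, fun q h => ⟨(hmain q h).1, (hmain q h).2, fun q' h' => ?_⟩⟩
  have := hiso (ψ q) (ψ q') (hmain q h).2 (hmain q' h').2
  rw [(hmain q h).1, (hmain q' h').1] at this
  exact this.symm

lemma smul_mem_locGeod (g : G) {γ : C(ℝ, X)} (h : γ ∈ LocGeodSet X) :
    smulCM G g γ ∈ LocGeodSet X := by
  intro t
  obtain ⟨ε, hε, hloc⟩ := h t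
  refine ⟨ε, hε, fun s hs u hu => ?_⟩
  show dist (g • γ s) (g • γ u) = _
  rw [dist_smul]
  exact hloc s hs u hu

lemma locRel_equivalence : Equivalence (locRel G (X := X)) := by
  constructor
  · exact fun a => ⟨1, ContinuousMap.ext fun t => one_smul G (a.1 t)⟩
  · rintro a b ⟨g, hg⟩
    refine ⟨g⁻¹, ContinuousMap.ext fun t => ?_⟩
    have h1 : g • a.1 t = b.1 t := congrArg (fun c : C(ℝ, X) => c t) hg
    show g⁻¹ • b.1 t = a.1 t
    rw [← h1, inv_smul_smul]
  · rintro a b c ⟨g, hg⟩ ⟨h, hh⟩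
    refine ⟨h * g, ContinuousMap.ext fun t => ?_⟩
    have h1 : g • a.1 t = b.1 t := congrArg (fun c : C(ℝ, X) => c t) hg
    have h2 : h • b.1 t = c.1 t := congrArg (fun c : C(ℝ, X) => c t) hh
    show (h * g) • a.1 t = c.1 t
    rw [mul_smul, h1, h2]

lemma continuousOn_union_closed {Y : Type*} [TopologicalSpace Y] {f : ℝ → Y} {s t : Set ℝ}
    (hsc : IsClosed s) (htc : IsClosed t)
    (hf : ContinuousOn f s) (hg : ContinuousOn f t) : ContinuousOn f (s ∪ t) := by
  intro x hx
  rw [continuousWithinAt_union]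
  constructor
  · by_cases h : x ∈ s
    · exact hf x h
    · exact continuousWithinAt_of_notMem_closure (by rwa [hsc.closure_eq])
  · by_cases h : x ∈ t
    · exact hg x h
    · exact continuousWithinAt_of_notMem_closure (by rwa [htc.closure_eq])


lemma proj_mem_locGeod (hdisc : DiscreteAction G X) (hfree : FreeAction G X)
    {γ : C(ℝ, X)} (hγ : γ ∈ LocGeodSet X) : projComp G γ ∈ LocGeodSet (QuotX G X) := by
  intro t
  obtain ⟨ε, hε, hloc⟩ := hγ t
  obtain ⟨r, hr, hiso⟩ := loc_isom G hdisc hfree (γ t)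
  set m := min ε r with hmdef
  have hm : 0 < m := lt_min hε hr
  have hme : m ≤ ε := min_le_left _ _
  have hmr : m ≤ r := min_le_right _ _
  have hsub : Set.Icc (t - m) (t + m) ⊆ Set.Icc (t - ε) (t + ε) :=
    Set.Icc_subset_Icc (by linarith) (by linarith)
  have htm : t ∈ Set.Icc (t - m) (t + m) := ⟨by linarith, by linarith⟩
  refine ⟨m, hm, fun s hs u hu => ?_⟩
  have hts : dist (γ t) (γ s) ≤ r := by
    rw [hloc t (hsub htm) s (hsub hs)]
    have h1 : |t - s| ≤ m := abs_le.mpr ⟨by linarith [hs.2], by linarith [hs.1]⟩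
    linarith
  have htu : dist (γ t) (γ u) ≤ r := by
    rw [hloc t (hsub htm) u (hsub hu)]
    have h1 : |t - u| ≤ m := abs_le.mpr ⟨by linarith [hu.2], by linarith [hu.1]⟩
    linarith
  show dist (projQ G (γ s)) (projQ G (γ u)) = |s - u|
  rw [hiso (γ s) (γ u) hts htu, hloc s (hsub hs) u (hsub hu)]

lemma lift_mem_locGeod (hdisc : DiscreteAction G X) (hfree : FreeAction G X)
    {γ : C(ℝ, X)} {η : C(ℝ, QuotX G X)}
    (hη : η ∈ LocGeodSet (QuotX G X)) (hl : ∀ t, projQ G (γ t) = η t) :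
    γ ∈ LocGeodSet X := by
  intro t
  obtain ⟨ε, hε, hloc⟩ := hη t
  obtain ⟨r, hr, hiso⟩ := loc_isom G hdisc hfree (γ t)
  obtain ⟨δ, hδ, hcont⟩ := Metric.continuous_iff.mp γ.continuous t r hr
  set m := min ε (δ/2) with hmdef
  have hm0 : 0 < m := lt_min hε (by linarith)
  have hme : m ≤ ε := min_le_left _ _
  have hmd : m ≤ δ/2 := min_le_right _ _
  have hsub : Set.Icc (t - m) (t + m) ⊆ Set.Icc (t - ε) (t + ε) :=
    Set.Icc_subset_Icc (by linarith) (by linarith)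
  refine ⟨m, hm0, fun s hs u hu => ?_⟩
  have hds : dist (γ t) (γ s) ≤ r := by
    rw [dist_comm]
    refine le_of_lt (hcont s ?_)
    rw [Real.dist_eq]
    have h1 : |s - t| ≤ m := abs_le.mpr ⟨by linarith [hs.1], by linarith [hs.2]⟩
    linarith
  have hdu : dist (γ t) (γ u) ≤ r := by
    rw [dist_comm]
    refine le_of_lt (hcont u ?_)
    rw [Real.dist_eq]
    have h1 : |u - t| ≤ m := abs_le.mpr ⟨by linarith [hu.1], by linarith [hu.2]⟩
    linarith
  have h2 := hiso (γ s) (γ u) hds hdu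
  rw [hl s, hl u] at h2
  rw [← h2]
  exact hloc s (hsub hs) u (hsub hu)

lemma lift_exists (hdisc : DiscreteAction G X) (hfree : FreeAction G X)
    (η : C(ℝ, QuotX G X)) (x₀ : X) (hx₀ : projQ G x₀ = η 0) :
    ∃ γ : C(ℝ, X), γ 0 = x₀ ∧ ∀ t, projQ G (γ t) = η t := by
  classical
  set S : Set ℝ := {T | 0 ≤ T ∧ ∃ γ : ℝ → X, ContinuousOn γ (Set.Icc (-T) T) ∧ γ 0 = x₀ ∧
    ∀ t ∈ Set.Icc (-T) T, projQ G (γ t) = η t} with hSdef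
  have h0S : (0:ℝ) ∈ S := by
    refine ⟨le_refl 0, fun _ => x₀, continuousOn_const, rfl, fun t ht => ?_⟩
    rw [show t = 0 from le_antisymm ht.2 (by simpa using ht.1), hx₀]
  have hdown : ∀ T T' : ℝ, T ∈ S → 0 ≤ T' → T' ≤ T → T' ∈ S := by
    rintro T T' ⟨hT0, γ, hc, h0, hp⟩ h1 h2
    exact ⟨h1, γ, hc.mono (Set.Icc_subset_Icc (by linarith) h2), h0,
      fun t ht => hp t (Set.Icc_subset_Icc (by linarith) h2 ht)⟩
  have hstep : ∀ Ts : ℝ, 0 ≤ Ts → BddAbove S → Ts = sSup S → ∃ T' ∈ S, Ts < T' := by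
    intro Ts hTs hbdd hsup
    obtain ⟨rR, hrR, ψR, hψR0, hψR⟩ := local_section G hdisc hfree (Quotient.out (η Ts))
    obtain ⟨rL, hrL, ψL, hψL0, hψL⟩ := local_section G hdisc hfree (Quotient.out (η (-Ts)))
    have hzR : projQ G (Quotient.out (η Ts)) = η Ts := Quotient.out_eq _
    have hzL : projQ G (Quotient.out (η (-Ts))) = η (-Ts) := Quotient.out_eq _
    rw [hzR] at hψR
    rw [hzL] at hψL
    obtain ⟨δR, hδR, hcR⟩ := Metric.continuous_iff.mp η.continuous Ts rR hrR
    obtain ⟨δL, hδL, hcL⟩ := Metric.continuous_iff.mp η.continuous (-Ts) rL hrL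
    set δ := min δR δL with hδdef
    have hδ0 : 0 < δ := lt_min hδR hδL
    have hδR' : δ ≤ δR := min_le_left _ _
    have hδL' : δ ≤ δL := min_le_right _ _
    have hlt : Ts - δ/2 < sSup S := by rw [← hsup]; linarith
    obtain ⟨T, hTS, hTgt⟩ := exists_lt_of_lt_csSup ⟨0, h0S⟩ hlt
    have hTle : T ≤ Ts := hsup ▸ le_csSup hbdd hTS
    obtain ⟨hT0, γ, hγc, hγ0, hγp⟩ := hTS
    have hdTR : ∀ u : ℝ, T ≤ u → u ≤ T + δ/2 → dist (η Ts) (η u) < rR := by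
      intro u h1 h2
      rw [dist_comm]
      apply hcR
      rw [Real.dist_eq, abs_lt]
      constructor <;> linarith
    have hdTL : ∀ u : ℝ, -T - δ/2 ≤ u → u ≤ -T → dist (η (-Ts)) (η u) < rL := by
      intro u h1 h2
      rw [dist_comm]
      apply hcL
      rw [Real.dist_eq, abs_lt]
      constructor <;> linarith
    have hprojR : projQ G (ψR (η T)) = η T :=
      (hψR (η T) (hdTR T (le_refl T) (by linarith))).1
    have hprojL : projQ G (ψL (η (-T))) = η (-T) :=
      (hψL (η (-T)) (hdTL (-T) (by linarith) (le_refl _))).1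
    have hγpT : projQ G (γ T) = η T := hγp T ⟨by linarith, le_refl T⟩
    have hγpmT : projQ G (γ (-T)) = η (-T) := hγp (-T) ⟨le_refl _, by linarith⟩
    obtain ⟨gR, hgR⟩ := (projQ_eq_iff G).mp (hγpT.trans hprojR.symm)
    obtain ⟨gL, hgL⟩ := (projQ_eq_iff G).mp (hγpmT.trans hprojL.symm)
    set fR : ℝ → X := fun u => gR • ψR (η u) with hfRdef
    set fL : ℝ → X := fun u => gL • ψL (η u) with hfLdef
    have hfRc : ContinuousOn fR (Set.Icc T (T + δ/2)) := by
      intro u hu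
      have hηc : ContinuousWithinAt η (Set.Icc T (T + δ/2)) u :=
        η.continuous.continuousAt.continuousWithinAt
      rw [Metric.continuousWithinAt_iff] at hηc ⊢
      intro ε hε
      obtain ⟨dd, hdd, h⟩ := hηc ε hε
      refine ⟨dd, hdd, fun v hv hvd => ?_⟩
      have heq : dist (fR v) (fR u) = dist (η v) (η u) := by
        show dist (gR • ψR (η v)) (gR • ψR (η u)) = _
        rw [dist_smul]
        exact (hψR (η v) (hdTR v hv.1 hv.2)).2.2 (η u) (hdTR u hu.1 hu.2)
      rw [heq]
      exact h hv hvd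
    have hfLc : ContinuousOn fL (Set.Icc (-T - δ/2) (-T)) := by
      intro u hu
      have hηc : ContinuousWithinAt η (Set.Icc (-T - δ/2) (-T)) u :=
        η.continuous.continuousAt.continuousWithinAt
      rw [Metric.continuousWithinAt_iff] at hηc ⊢
      intro ε hε
      obtain ⟨dd, hdd, h⟩ := hηc ε hε
      refine ⟨dd, hdd, fun v hv hvd => ?_⟩
      have heq : dist (fL v) (fL u) = dist (η v) (η u) := by
        show dist (gL • ψL (η v)) (gL • ψL (η u)) = _
        rw [dist_smul]
        exact (hψL (η v) (hdTL v hv.1 hv.2)).2.2 (η u) (hdTL u hu.1 hu.2)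
      rw [heq]
      exact h hv hvd
    set γ' : ℝ → X := fun u => if u < -T then fL u else if u ≤ T then γ u else fR u with hγ'def
    have hEL : Set.EqOn γ' fL (Set.Icc (-T - δ/2) (-T)) := by
      intro u hu
      by_cases h : u < -T
      · simp only [hγ'def, if_pos h]
      · have hu2 : u = -T := le_antisymm hu.2 (not_lt.mp h)
        have huT : u ≤ T := by linarith
        have h1 : γ' u = γ u := by simp only [hγ'def, if_neg h, if_pos huT]
        rw [h1, hu2]
        exact hgL.symm
    have hEB : Set.EqOn γ' γ (Set.Icc (-T) T) := by
      intro u hu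
      simp only [hγ'def, if_neg (not_lt.mpr hu.1), if_pos hu.2]
    have hER : Set.EqOn γ' fR (Set.Icc T (T + δ/2)) := by
      intro u hu
      have hnl : ¬ u < -T := by push_neg; linarith [hu.1]
      by_cases h : u ≤ T
      · have hu2 : u = T := le_antisymm h hu.1
        have h1 : γ' u = γ u := by simp only [hγ'def, if_neg hnl, if_pos h]
        rw [h1, hu2]
        exact hgR.symm
      · simp only [hγ'def, if_neg hnl, if_neg h]
    have hcU : ContinuousOn γ'
        (Set.Icc (-T - δ/2) (-T) ∪ (Set.Icc (-T) T ∪ Set.Icc T (T + δ/2))) :=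
      continuousOn_union_closed isClosed_Icc (isClosed_Icc.union isClosed_Icc)
        (hfLc.congr hEL)
        (continuousOn_union_closed isClosed_Icc isClosed_Icc
          (hγc.congr hEB) (hfRc.congr hER))
    have hsub2 : Set.Icc (-(T + δ/2)) (T + δ/2) ⊆
        Set.Icc (-T - δ/2) (-T) ∪ (Set.Icc (-T) T ∪ Set.Icc T (T + δ/2)) := by
      intro u hu
      rcases le_or_gt u (-T) with h | h
      · exact Or.inl ⟨by linarith [hu.1], h⟩
      · rcases le_or_gt u T with h2 | h2
        · exact Or.inr (Or.inl ⟨le_of_lt h, h2⟩)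
        · exact Or.inr (Or.inr ⟨le_of_lt h2, hu.2⟩)
    refine ⟨T + δ/2, ⟨by linarith, γ', hcU.mono hsub2, ?_, ?_⟩, by linarith⟩
    · have h1 : γ' 0 = γ 0 := hEB ⟨by linarith, by linarith⟩
      rw [h1, hγ0]
    · intro t ht
      by_cases h : t < -T
      · have h1 : γ' t = fL t := hEL ⟨by linarith [ht.1], le_of_lt h⟩
        rw [h1]
        show projQ G (gL • ψL (η t)) = η t
        rw [projQ_smul]
        exact (hψL (η t) (hdTL t (by linarith [ht.1]) (le_of_lt h))).1
      · by_cases h2 : t ≤ T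
        · have h1 : γ' t = γ t := hEB ⟨not_lt.mp h, h2⟩
          rw [h1]
          exact hγp t ⟨not_lt.mp h, h2⟩
        · have h1 : γ' t = fR t := hER ⟨le_of_lt (not_le.mp h2), ht.2⟩
          rw [h1]
          show projQ G (gR • ψR (η t)) = η t
          rw [projQ_smul]
          exact (hψR (η t) (hdTR t (le_of_lt (not_le.mp h2)) ht.2)).1
  have hall : ∀ T : ℝ, 0 ≤ T → T ∈ S := by
    intro T hT
    by_contra hTn
    have hbdd : BddAbove S := by
      refine ⟨T, fun T' hT' => ?_⟩
      by_contra h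
      exact hTn (hdown T' T hT' hT (le_of_not_ge h))
    have hsup0 : 0 ≤ sSup S := le_csSup hbdd h0S
    obtain ⟨T', hT'S, hlt⟩ := hstep (sSup S) hsup0 hbdd rfl
    exact absurd (le_csSup hbdd hT'S) (not_le.mpr hlt)
  have hex : ∀ T : ℝ, 0 ≤ T → ∃ γ : ℝ → X, ContinuousOn γ (Set.Icc (-T) T) ∧ γ 0 = x₀ ∧
      ∀ t ∈ Set.Icc (-T) T, projQ G (γ t) = η t := fun T hT => (hall T hT).2
  set L : ∀ T : ℝ, 0 ≤ T → ℝ → X := fun T hT => Classical.choose (hex T hT) with hLdef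
  have hLspec : ∀ (T : ℝ) (hT : 0 ≤ T), ContinuousOn (L T hT) (Set.Icc (-T) T) ∧
      L T hT 0 = x₀ ∧ ∀ t ∈ Set.Icc (-T) T, projQ G (L T hT t) = η t :=
    fun T hT => Classical.choose_spec (hex T hT)
  have hagree : ∀ (T T' : ℝ) (hT : 0 ≤ T) (hT' : 0 ≤ T'), T ≤ T' →
      Set.EqOn (L T hT) (L T' hT') (Set.Icc (-T) T) := by
    intro T T' hT hT' hle
    have hzero : (0:ℝ) ∈ Set.Icc (-T) T := ⟨by linarith, hT⟩
    refine lift_unique G hdisc hfree isPreconnected_Icc (hLspec T hT).1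
      ((hLspec T' hT').1.mono (Set.Icc_subset_Icc (by linarith) hle)) ?_ hzero ?_
    · intro t ht
      show projQ G (L T hT t) = projQ G (L T' hT' t)
      rw [(hLspec T hT).2.2 t ht,
        (hLspec T' hT').2.2 t (Set.Icc_subset_Icc (by linarith) hle ht)]
    · rw [(hLspec T hT).2.1, (hLspec T' hT').2.1]
  have habs : ∀ u : ℝ, (0:ℝ) ≤ |u| + 1 := fun u => by positivity
  set Γ : ℝ → X := fun u => L (|u| + 1) (habs u) u with hΓdef
  have hΓmem : ∀ u : ℝ, u ∈ Set.Icc (-(|u| + 1)) (|u| + 1) :=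
    fun u => ⟨by linarith [neg_abs_le u], by linarith [le_abs_self u]⟩
  have habs2 : ∀ u : ℝ, (0:ℝ) ≤ |u| + 2 := fun u => by positivity
  have hΓeq : ∀ u₀ : ℝ, Set.EqOn Γ (L (|u₀| + 2) (habs2 u₀)) (Metric.ball u₀ 1) := by
    intro u₀ u hu
    have hu' : |u - u₀| < 1 := by rwa [Metric.mem_ball, Real.dist_eq] at hu
    have h1 : |u| + 1 ≤ |u₀| + 2 := by
      have := abs_sub_abs_le_abs_sub u u₀
      linarith
    exact hagree (|u| + 1) (|u₀| + 2) (habs u) (habs2 u₀) h1 (hΓmem u)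
  have hΓc : Continuous Γ := by
    rw [continuous_iff_continuousAt]
    intro u₀
    have hmem : Set.Icc (-(|u₀| + 2)) (|u₀| + 2) ∈ 𝓝 u₀ :=
      Icc_mem_nhds (by linarith [neg_abs_le u₀]) (by linarith [le_abs_self u₀])
    have h1 : ContinuousAt (L (|u₀| + 2) (habs2 u₀)) u₀ :=
      (hLspec (|u₀| + 2) (habs2 u₀)).1.continuousAt hmem
    exact h1.congr (Filter.eventuallyEq_of_mem (Metric.ball_mem_nhds u₀ one_pos)
      (fun u hu => (hΓeq u₀ hu).symm))
  refine ⟨⟨Γ, hΓc⟩, ?_, ?_⟩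
  · show Γ 0 = x₀
    exact (hLspec (|(0:ℝ)| + 1) (habs 0)).2.1
  · intro t
    show projQ G (Γ t) = η t
    exact (hLspec (|t| + 1) (habs t)).2.2 t (hΓmem t)


lemma unif_loc_isom (hdisc : DiscreteAction G X) (hfree : FreeAction G X)
    (K : Set X) (hK : IsCompact K) :
    ∃ r : ℝ, 0 < r ∧ ∀ x ∈ K, ∀ y z : X, dist x y ≤ r → dist x z ≤ r →
      dist (projQ G y) (projQ G z) = dist y z := by
  classical
  choose r hr hiso using fun x : X => loc_isom G hdisc hfree x
  have hcov : ∀ x ∈ K, Metric.ball x (r x / 2) ∈ 𝓝 x :=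
    fun x _ => Metric.ball_mem_nhds x (by linarith [hr x])
  obtain ⟨t, _, hKt⟩ := hK.elim_nhds_subcover (fun x => Metric.ball x (r x / 2)) hcov
  rcases t.eq_empty_or_nonempty with hte | htne
  · refine ⟨1, one_pos, fun x hx => ?_⟩
    have := hKt hx
    rw [hte] at this
    simp at this
  · obtain ⟨c₀, hc₀, hmin⟩ := t.exists_min_image (fun c => r c / 2) htne
    refine ⟨r c₀ / 2, by linarith [hr c₀], fun x hx y z hy hz => ?_⟩
    have hx2 := hKt hx
    simp only [Set.mem_iUnion, Finset.mem_coe] at hx2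
    obtain ⟨c, hct, hxc⟩ := hx2
    have hle : r c₀ / 2 ≤ r c / 2 := hmin c hct
    have hxc' : dist x c < r c / 2 := Metric.mem_ball.mp hxc
    have hcy : dist c y ≤ r c := by
      have := dist_triangle c x y
      rw [dist_comm c x] at this
      linarith
    have hcz : dist c z ≤ r c := by
      have := dist_triangle c x z
      rw [dist_comm c x] at this
      linarith
    exact hiso c y z hcy hcz

lemma cm_basic_mem {Y : Type*} [PseudoMetricSpace Y] (f : C(ℝ, Y)) {K : Set ℝ}
    (hK : IsCompact K) {ε : ℝ} (hε : 0 < ε) :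
    {g : C(ℝ, Y) | ∀ t ∈ K, dist (f t) (g t) < ε} ∈ 𝓝 f := by
  have hb := nhds_basis_uniformity'
    (ContinuousMap.hasBasis_compactConvergenceUniformity (α := ℝ) (β := Y)) (x := f)
  refine Filter.mem_of_superset
    (hb.mem_of_mem (i := (K, {p : Y × Y | dist p.1 p.2 < ε}))
      ⟨hK, Metric.dist_mem_uniformity hε⟩) ?_
  intro g hg t ht
  exact hg t ht

lemma cm_basic_elim {Y : Type*} [PseudoMetricSpace Y] (f : C(ℝ, Y)) {N : Set C(ℝ, Y)}
    (hN : N ∈ 𝓝 f) : ∃ K : Set ℝ, IsCompact K ∧ ∃ ε : ℝ, 0 < ε ∧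
      {g : C(ℝ, Y) | ∀ t ∈ K, dist (f t) (g t) < ε} ⊆ N := by
  have hb := nhds_basis_uniformity'
    (ContinuousMap.hasBasis_compactConvergenceUniformity (α := ℝ) (β := Y)) (x := f)
  obtain ⟨⟨K, V⟩, ⟨hK, hV⟩, hsub⟩ := hb.mem_iff.mp hN
  obtain ⟨ε, hε, hεV⟩ := Metric.mem_uniformity_dist.mp hV
  exact ⟨K, hK, ε, hε, fun g hg => hsub fun t ht => hεV (hg t ht)⟩

end Aux

end Paper

open Paper in
/-- Let `Γ = G` be a group of isometries of a proper length metric space `X`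
acting discretely and freely. Then `Π : Loc-Geod(X) → Loc-Geod(Γ\X)`, `Π(γ) = π∘γ`, is
continuous, surjective and `Γ`-equivariant, and the induced map
`Γ\Loc-Geod(X) → Loc-Geod(Γ\X)` is a homeomorphism (an embedding with image
`Loc-Geod(Γ\X)`). -/
theorem statement_12 {X : Type*} [MetricSpace X] [ProperSpace X] (hlen : IsLengthSpace X)
    (G : Type*) [Group G] [MulAction G X] [IsIsometricSMul G X]
    (hdisc : DiscreteAction G X) (hfree : FreeAction G X) :
    (∀ γ ∈ LocGeodSet X, projComp G γ ∈ LocGeodSet (QuotX G X)) ∧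
    Continuous (fun γ : ↥(LocGeodSet X) => projComp G γ.1) ∧
    (∀ (g : G) (γ : C(ℝ, X)), projComp G (smulCM G g γ) = projComp G γ) ∧
    (∀ η ∈ LocGeodSet (QuotX G X), ∃ γ ∈ LocGeodSet X, projComp G γ = η) ∧
    ∃ F : Quot (locRel G (X := X)) → C(ℝ, QuotX G X),
      (∀ a : ↥(LocGeodSet X), F (Quot.mk _ a) = projComp G a.1) ∧
      IsEmbedding F ∧ Set.range F = LocGeodSet (QuotX G X) := by
  classical
  have hpart1 : ∀ γ ∈ LocGeodSet X, projComp G γ ∈ LocGeodSet (QuotX G X) :=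
    fun γ hγ => proj_mem_locGeod G hdisc hfree hγ
  have hequiv : ∀ (g : G) (γ : C(ℝ, X)), projComp G (smulCM G g γ) = projComp G γ :=
    fun g γ => ContinuousMap.ext fun t => projQ_smul G g (γ t)
  have hsurj : ∀ η ∈ LocGeodSet (QuotX G X), ∃ γ ∈ LocGeodSet X, projComp G γ = η := by
    intro η hη
    obtain ⟨γ, hγ0, hγp⟩ := lift_exists G hdisc hfree η (Quotient.out (η 0)) (Quotient.out_eq _)
    exact ⟨γ, lift_mem_locGeod G hdisc hfree hη hγp, ContinuousMap.ext fun t => hγp t⟩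
  have hcontF0 : Continuous fun γ : ↥(LocGeodSet X) => projComp G γ.1 :=
    (ContinuousMap.continuous_postcomp (projCM G)).comp continuous_subtype_val
  refine ⟨hpart1, hcontF0, hequiv, hsurj, ?_⟩
  have hresp : ∀ a b : ↥(LocGeodSet X), locRel G a b → projComp G a.1 = projComp G b.1 := by
    intro a b hab
    obtain ⟨g, hg⟩ := hab
    rw [← hg]
    exact (hequiv g a.1).symm
  have hFc : Continuous (Quot.lift (fun a : ↥(LocGeodSet X) => projComp G a.1) hresp) :=
    continuous_quot_lift _ hcontF0
  refine ⟨Quot.lift (fun a : ↥(LocGeodSet X) => projComp G a.1) hresp, fun a => rfl,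
    ⟨?_, ?_⟩, ?_⟩
  · -- IsInducing
    rw [Topology.isInducing_iff_nhds]
    intro q
    refine le_antisymm (Filter.map_le_iff_le_comap.mp (hFc.continuousAt (x := q))) ?_
    induction q using Quot.ind with
    | _ a =>
    intro N hN
    rw [Filter.mem_comap]
    have hN' : Quot.mk (locRel G (X := X)) ⁻¹' N ∈ 𝓝 a :=
      (continuous_quot_mk.continuousAt).preimage_mem_nhds hN
    rw [nhds_subtype_eq_comap, Filter.mem_comap] at hN'
    obtain ⟨N', hN'n, hN'sub⟩ := hN'
    obtain ⟨K, hK, ε₀, hε₀, hbasic⟩ := cm_basic_elim (a.1) hN'n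
    obtain ⟨R, hR⟩ := hK.isBounded.subset_closedBall 0
    set R' := max R 1 with hR'def
    have hR'1 : (1:ℝ) ≤ R' := le_max_right R 1
    have hKsub : K ⊆ Set.Icc (-R') R' := by
      intro t ht
      have h1 := hR ht
      rw [Metric.mem_closedBall, Real.dist_0_eq_abs] at h1
      have h2 := abs_le.mp h1
      have h3 : R ≤ R' := le_max_left R 1
      exact ⟨by linarith [h2.1], by linarith [h2.2]⟩
    set Kc := Set.Icc (-R') R' with hKcdef
    have hKcc : IsCompact Kc := isCompact_Icc
    have h0Kc : (0:ℝ) ∈ Kc := ⟨by linarith, by linarith⟩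
    obtain ⟨rmin, hrmin, hiso⟩ :=
      unif_loc_isom G hdisc hfree (a.1 '' Kc) (hKcc.image a.1.continuous)
    set ε := min ε₀ rmin / 2 with hεdef
    have hminpos : 0 < min ε₀ rmin := lt_min hε₀ hrmin
    have hε : 0 < ε := by rw [hεdef]; linarith
    have hεε₀ : ε < ε₀ := by
      have := min_le_left ε₀ rmin
      rw [hεdef]; linarith
    have hεr : 2 * ε ≤ rmin := by
      have := min_le_right ε₀ rmin
      rw [hεdef]; linarith
    refine ⟨_, cm_basic_mem (projComp G a.1) hKcc hε, ?_⟩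
    intro qb hqb
    induction qb using Quot.ind with
    | _ b =>
    have hb : ∀ t ∈ Kc, dist (projQ G (a.1 t)) (projQ G (b.1 t)) < ε := hqb
    obtain ⟨y, hy, hyd⟩ := ball_surj G (a.1 0) (projQ G (b.1 0)) ε (hb 0 h0Kc)
    obtain ⟨g, hg⟩ := (projQ_eq_iff G).mp hy
    set b' := smulCM G g b.1 with hb'def
    have hb'proj : ∀ t, projQ G (b' t) = projQ G (b.1 t) := fun t => projQ_smul G g (b.1 t)
    have hb'0 : dist (a.1 0) (b' 0) < ε := by
      show dist (a.1 0) (g • b.1 0) < ε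
      rw [hg]
      exact hyd
    haveI : PreconnectedSpace ↥Kc := Subtype.preconnectedSpace isPreconnected_Icc
    set A : Set ↥Kc := {t | dist (a.1 t.1) (b' t.1) ≤ ε} with hAdef
    have hAcont : Continuous fun t : ↥Kc => dist (a.1 t.1) (b' t.1) :=
      (a.1.continuous.comp continuous_subtype_val).dist
        (b'.continuous.comp continuous_subtype_val)
    have hAeq : A = {t : ↥Kc | dist (a.1 t.1) (b' t.1) < rmin} := by
      ext t
      simp only [hAdef, Set.mem_setOf_eq]
      constructor
      · intro h
        linarith
      · intro h
        have hmem : a.1 t.1 ∈ a.1 '' Kc := ⟨t.1, t.2, rfl⟩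
        have h3 : dist (projQ G (a.1 t.1)) (projQ G (b' t.1)) = dist (a.1 t.1) (b' t.1) :=
          hiso (a.1 t.1) hmem (a.1 t.1) (b' t.1) (by rw [dist_self]; linarith) (le_of_lt h)
        rw [hb'proj t.1] at h3
        rw [← h3]
        exact le_of_lt (hb t.1 t.2)
    have hclopen : IsClopen A := by
      constructor
      · exact isClosed_le hAcont continuous_const
      · rw [hAeq]
        exact isOpen_lt hAcont continuous_const
    have hAuniv : A = Set.univ := hclopen.eq_univ ⟨⟨0, h0Kc⟩, le_of_lt hb'0⟩
    have hball : ∀ t ∈ Kc, dist (a.1 t) (b' t) ≤ ε := by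
      intro t ht
      have hm : (⟨t, ht⟩ : ↥Kc) ∈ A := hAuniv ▸ Set.mem_univ _
      exact hm
    have hb'mem : (⟨b', smul_mem_locGeod G g b.2⟩ : ↥(LocGeodSet X)) ∈
        Quot.mk (locRel G (X := X)) ⁻¹' N := by
      apply hN'sub
      show b' ∈ N'
      apply hbasic
      intro t ht
      exact lt_of_le_of_lt (hball t (hKsub ht)) hεε₀
    have hmkeq : Quot.mk (locRel G (X := X))
        (⟨b', smul_mem_locGeod G g b.2⟩ : ↥(LocGeodSet X)) = Quot.mk _ b := by
      apply Quot.sound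
      refine ⟨g⁻¹, ContinuousMap.ext fun t => ?_⟩
      show g⁻¹ • (g • b.1 t) = b.1 t
      rw [inv_smul_smul]
    rw [show (Quot.mk _ b : Quot (locRel G (X := X))) = _ from hmkeq.symm]
    exact hb'mem
  · -- injective
    intro qa qb
    induction qa using Quot.ind with
    | _ a =>
    induction qb using Quot.ind with
    | _ b =>
    intro h
    have h' : projComp G a.1 = projComp G b.1 := h
    have h0 : projQ G (b.1 0) = projQ G (a.1 0) :=
      (congrArg (fun c : C(ℝ, QuotX G X) => c 0) h').symm
    obtain ⟨g, hg⟩ := (projQ_eq_iff G).mp h0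
    apply Quot.sound
    refine ⟨g, ContinuousMap.ext fun t => ?_⟩
    have hproj : Set.EqOn (projQ G ∘ (smulCM G g a.1)) (projQ G ∘ b.1) Set.univ := by
      intro u _
      show projQ G (g • a.1 u) = projQ G (b.1 u)
      rw [projQ_smul]
      exact congrArg (fun c : C(ℝ, QuotX G X) => c u) h'
    have h00 : (smulCM G g a.1) 0 = b.1 0 := hg
    have hEq := lift_unique G hdisc hfree isPreconnected_univ
      ((smulCM G g a.1).continuous.continuousOn) (b.1.continuous.continuousOn)
      hproj (Set.mem_univ 0) h00
    exact hEq (Set.mem_univ t)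
  · -- range
    apply Set.Subset.antisymm
    · rintro β ⟨q, rfl⟩
      induction q using Quot.ind with
      | _ a => exact hpart1 a.1 a.2
    · intro η hη
      obtain ⟨γ, hγm, hγe⟩ := hsurj η hη
      exact ⟨Quot.mk _ ⟨γ, hγm⟩, hγe⟩
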